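/- Let p be a prime with p > k. The chromatic number of the graph F_{≤k} is at most 1 + p. -/

import Mathlib

/-- Coprime integer pairs: the vertices of the Farey graph before
identifying `(p,q)` with `(-p,-q)`. -/
def CoprimePair : Type := {v : ℤ × ℤ // IsCoprime v.1 v.2}

/-- The equivalence identifying a coprime pair with its negative. -/
def fareySetoid : Setoid CoprimePair where
  r v w := v.1 = w.1 ∨ v.1 = -w.1
  iseqv := by
    constructor
    · intro v; exact Or.inl rfl
    · rintro v w (h | h)
      · exact Or.inl h.symm
      · right; simp [h]
    · rintro u v w (h1 | h1) (h2 | h2)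
      · exact Or.inl (h1.trans h2)
      · right; rw [h1, h2]
      · right; rw [h1, h2]
      · left; rw [h1, h2, neg_neg]

/-- Vertices of the Farey graph: coprime pairs up to sign. -/
def FareyVertex : Type := Quotient fareySetoid

/-- The graph `F_{≤ k}`: edges between distinct vertices admitting
representatives with determinant pairing of absolute value between 1 and `k`. -/
def FareyLE (k : ℕ) : SimpleGraph FareyVertex where
  Adj x y := x ≠ y ∧ ∃ a b : CoprimePair, x = Quotient.mk fareySetoid a ∧
      y = Quotient.mk fareySetoid b ∧
      1 ≤ |a.1.1 * b.1.2 - a.1.2 * b.1.1| ∧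
      |a.1.1 * b.1.2 - a.1.2 * b.1.1| ≤ (k : ℤ)
  symm := by
    constructor
    rintro x y ⟨hne, a, b, hx, hy, h1, h2⟩
    refine ⟨hne.symm, b, a, hy, hx, ?_, ?_⟩
    · rwa [show b.1.1 * a.1.2 - b.1.2 * a.1.1 =
        -(a.1.1 * b.1.2 - a.1.2 * b.1.1) by ring, abs_neg]
    · rwa [show b.1.1 * a.1.2 - b.1.2 * a.1.1 =
        -(a.1.1 * b.1.2 - a.1.2 * b.1.1) by ring, abs_neg]
  loopless := by constructor; rintro x ⟨hne, _⟩; exact hne rfl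

theorem stmt_9 (k p : ℕ) (hp : p.Prime) (hpk : k < p) :
    (FareyLE k).chromaticNumber ≤ 1 + p := by
  haveI : Fact p.Prime := ⟨hp⟩
  -- color function on pairs
  set f : CoprimePair → Option (ZMod p) := fun v =>
    if (v.1.2 : ZMod p) = 0 then none else some ((v.1.1 : ZMod p) / (v.1.2 : ZMod p)) with hf
  have hwell : ∀ a b : CoprimePair, fareySetoid.r a b → f a = f b := by
    rintro a b (h | h)
    · simp [hf, h]
    · have h1 : (a.1.1 : ZMod p) = -(b.1.1 : ZMod p) := by
        rw [show a.1.1 = -b.1.1 from congrArg Prod.fst h]; push_cast; ring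
      have h2 : (a.1.2 : ZMod p) = -(b.1.2 : ZMod p) := by
        rw [show a.1.2 = -b.1.2 from congrArg Prod.snd h]; push_cast; ring
      simp [hf, h1, h2, neg_eq_zero, neg_div_neg_eq]
  set C : FareyVertex → Option (ZMod p) := Quotient.lift f hwell with hC
  have hvalid : ∀ {x y}, (FareyLE k).Adj x y → C x ≠ C y := by
    rintro x y ⟨hne, a, b, hx, hy, hd1, hd2⟩
    rw [hx, hy]
    show f a ≠ f b
    set D : ℤ := a.1.1 * b.1.2 - a.1.2 * b.1.1 with hD
    have hDne : (D : ZMod p) ≠ 0 := by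
      intro h
      rw [ZMod.intCast_zmod_eq_zero_iff_dvd] at h
      have hdvd : (p : ℤ) ∣ D := h
      have h1 : (p : ℤ) ≤ |D| := Int.le_of_dvd (by omega) ((dvd_abs _ _).mpr hdvd)
      omega
    simp only [hf]
    by_cases ha : (a.1.2 : ZMod p) = 0 <;> by_cases hb : (b.1.2 : ZMod p) = 0
    · exfalso; apply hDne
      have : (D : ZMod p) = (a.1.1 : ZMod p) * b.1.2 - (a.1.2 : ZMod p) * b.1.1 := by
        rw [hD]; push_cast; ring
      rw [this, ha, hb]; ring
    · simp [ha, hb]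
    · simp [ha, hb]
    · simp only [if_neg ha, if_neg hb, ne_eq, Option.some.injEq]
      intro heq
      apply hDne
      have := (div_eq_div_iff ha hb).mp heq
      have hD0 : (a.1.1 : ZMod p) * b.1.2 - (a.1.2 : ZMod p) * b.1.1 = 0 := by
        linear_combination this
      have : (D : ZMod p) = (a.1.1 : ZMod p) * b.1.2 - (a.1.2 : ZMod p) * b.1.1 := by
        rw [hD]; push_cast; ring
      rw [this, hD0]
  have col : (FareyLE k).Coloring (Option (ZMod p)) := ⟨C, fun h => hvalid h⟩
  have := col.colorable.chromaticNumber_le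
  simpa [Fintype.card_option, ZMod.card, add_comm] using this
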